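/- arXiv:1803.06232 — 4 statements merged into one kernel-verified Lean document; each statement's English description precedes it below -/
import Mathlib

section
/- Let d ≥ 1, 0 < m < 1, and k > d(1-m)/m. For every χ > 0 there exists a constant C = C(χ,m,k,d) ∈ ℝ such that for every probability density ρ on ℝ^d, (1/(m-1)) ∫_{ℝ^d} ρ(x)^m dx + χ ∫_{ℝ^d} |x|^k ρ(x) dx ≥ C. In particular the functional ρ ↦ E_m[ρ] + χ J_k[ρ] is bounded below on probability densities. -/
open MeasureTheory Real

private lemma aux_rpow_le_eps (m : ℝ) (hm0 : 0 < m) (hm1 : m < 1) {a ε : ℝ}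
    (ha : 0 ≤ a) (hε : 0 < ε) : a ^ m ≤ ε * a + ε ^ (-(m / (1 - m))) := by
  have h1m : 0 < 1 - m := by linarith
  set T : ℝ := ε ^ (-(1 / (1 - m))) with hT
  have hT0 : 0 < T := rpow_pos_of_pos hε _
  rcases le_or_gt a T with h | h
  · have h1 : a ^ m ≤ T ^ m := rpow_le_rpow ha h hm0.le
    have h2 : T ^ m = ε ^ (-(m / (1 - m))) := by
      rw [hT, ← rpow_mul hε.le]
      ring_nf
    nlinarith [mul_nonneg hε.le ha]
  · have ha0 : 0 < a := hT0.trans h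
    have h1 : a ^ (m - 1) ≤ T ^ (m - 1) :=
      rpow_le_rpow_of_nonpos hT0 h.le (by linarith)
    have h2 : T ^ (m - 1) = ε := by
      rw [hT, ← rpow_mul hε.le]
      rw [show -(1 / (1 - m)) * (m - 1) = (1 - m) / (1 - m) by ring,
        div_self h1m.ne', rpow_one]
    have h3 : a ^ m = a ^ (m - 1) * a := by
      rw [← rpow_add_one ha0.ne' (m - 1)]
      ring_nf
    have h4 : a ^ (m - 1) * a ≤ ε * a := by
      rw [h2] at h1
      exact mul_le_mul_of_nonneg_right h1 ha0.le
    have h5 : (0:ℝ) ≤ ε ^ (-(m / (1 - m))) := rpow_nonneg hε.le _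
    linarith [h3 ▸ h4]

theorem entropy_plus_moment_bounded_below (d : ℕ) (hd : 1 ≤ d) (m k : ℝ)
    (hm0 : 0 < m) (hm1 : m < 1) (hk : (d:ℝ) * (1 - m) / m < k)
    (χ : ℝ) (hχ : 0 < χ) :
    ∃ C : ℝ, ∀ ρ : EuclideanSpace ℝ (Fin d) → ℝ,
      (∀ x, 0 ≤ ρ x) → Integrable ρ → (∫ x, ρ x) = 1 →
      Integrable (fun x => ‖x‖ ^ k * ρ x) →
      C ≤ (1 / (m - 1)) * (∫ x, ρ x ^ m) + χ * (∫ x, ‖x‖ ^ k * ρ x) := by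
  have h1m : 0 < 1 - m := by linarith
  have hd0 : (0:ℝ) < d := by exact_mod_cast hd
  have hk0 : 0 < k := lt_trans (by positivity) hk
  set r : ℝ := k * m / (1 - m) with hr_def
  have hdr : (d:ℝ) < r := by
    rw [hr_def, lt_div_iff₀ h1m]
    have h := (div_lt_iff₀ hm0).mp hk
    nlinarith
  have hBint : Integrable (fun x : EuclideanSpace ℝ (Fin d) => (1 + ‖x‖) ^ (-r)) :=
    integrable_one_add_norm (by rw [finrank_euclideanSpace_fin]; exact hdr)
  set B : ℝ := ∫ x : EuclideanSpace ℝ (Fin d), (1 + ‖x‖) ^ (-r) with hB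
  have hB0 : 0 ≤ B :=
    integral_nonneg fun x => rpow_nonneg (by positivity) _
  set c : ℝ := B ^ (1 - m) / (1 - m) + 1 with hc
  have hc0 : 0 < c := by
    have h : 0 ≤ B ^ (1 - m) / (1 - m) := div_nonneg (rpow_nonneg hB0 _) h1m.le
    rw [hc]; linarith
  set t : ℝ := (2:ℝ) ^ k with ht
  have ht0 : 0 < t := rpow_pos_of_pos two_pos k
  set ε : ℝ := min (χ / (c * t)) 1 with hε
  have hε0 : 0 < ε := lt_min (by positivity) one_pos
  have hεct : c * ε * t ≤ χ := by
    have h1 : ε ≤ χ / (c * t) := min_le_left _ _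
    calc c * ε * t = ε * (c * t) := by ring
    _ ≤ χ / (c * t) * (c * t) := mul_le_mul_of_nonneg_right h1 (by positivity)
    _ = χ := div_mul_cancel₀ _ (by positivity)
  refine ⟨-χ - c * ε ^ (-(m / (1 - m))), fun ρ hρ hρint hρ1 hJint => ?_⟩
  set J : ℝ := ∫ x : EuclideanSpace ℝ (Fin d), ‖x‖ ^ k * ρ x with hJ
  have hJ0 : 0 ≤ J := integral_nonneg fun x => mul_nonneg (rpow_nonneg (norm_nonneg _) _) (hρ x)
  -- the weight
  set w : EuclideanSpace ℝ (Fin d) → ℝ := fun x => (1 + ‖x‖) ^ k with hw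
  have hw_pos : ∀ x, 0 < w x := fun x => rpow_pos_of_pos (by positivity) _
  have hw_le : ∀ x : EuclideanSpace ℝ (Fin d), w x ≤ t * (1 + ‖x‖ ^ k) := by
    intro x
    have h1 : (1:ℝ) + ‖x‖ ≤ 2 * max 1 ‖x‖ := by
      rcases max_cases (1:ℝ) ‖x‖ with ⟨h, h'⟩ | ⟨h, h'⟩ <;> rw [h] <;>
        [linarith; linarith [norm_nonneg x]]
    have h2 : w x ≤ (2 * max 1 ‖x‖) ^ k :=
      rpow_le_rpow (by positivity) h1 hk0.le
    have h3 : (2 * max 1 ‖x‖) ^ k = t * (max 1 ‖x‖) ^ k := by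
      rw [Real.mul_rpow (by norm_num) (le_trans zero_le_one (le_max_left _ _))]
    have h4 : (max 1 ‖x‖) ^ k ≤ 1 + ‖x‖ ^ k := by
      rcases max_cases (1:ℝ) ‖x‖ with ⟨h, h'⟩ | ⟨h, h'⟩ <;> rw [h]
      · rw [one_rpow]; nlinarith [rpow_nonneg (norm_nonneg x) k]
      · nlinarith
    calc w x ≤ t * (max 1 ‖x‖) ^ k := h3 ▸ h2
    _ ≤ t * (1 + ‖x‖ ^ k) := mul_le_mul_of_nonneg_left h4 ht0.le
  have hw_meas : Measurable w := by fun_prop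
  have hdom_int : Integrable (fun x : EuclideanSpace ℝ (Fin d) =>
      t * (ρ x + ‖x‖ ^ k * ρ x)) := ((hρint.add hJint).const_mul t)
  have hfint : Integrable (fun x : EuclideanSpace ℝ (Fin d) => ρ x * w x) := by
    refine hdom_int.mono' (hρint.aestronglyMeasurable.mul
      hw_meas.aestronglyMeasurable) (ae_of_all _ fun x => ?_)
    rw [Real.norm_eq_abs, abs_of_nonneg (mul_nonneg (hρ x) (hw_pos x).le)]
    calc ρ x * w x ≤ ρ x * (t * (1 + ‖x‖ ^ k)) :=
          mul_le_mul_of_nonneg_left (hw_le x) (hρ x)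
    _ = t * (ρ x + ‖x‖ ^ k * ρ x) := by ring
  have hf_le : (∫ x, ρ x * w x) ≤ t * (1 + J) := by
    have h1 : (∫ x, ρ x * w x) ≤ ∫ x : EuclideanSpace ℝ (Fin d),
        t * (ρ x + ‖x‖ ^ k * ρ x) := by
      refine integral_mono hfint hdom_int fun x => ?_
      calc ρ x * w x ≤ ρ x * (t * (1 + ‖x‖ ^ k)) :=
            mul_le_mul_of_nonneg_left (hw_le x) (hρ x)
      _ = t * (ρ x + ‖x‖ ^ k * ρ x) := by ring
    rwa [integral_const_mul, integral_add hρint hJint, hρ1, ← hJ] at h1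
  have hf_nonneg : (0:ℝ) ≤ ∫ x, ρ x * w x :=
    integral_nonneg fun x => mul_nonneg (hρ x) (hw_pos x).le
  have hρm : AEMeasurable ρ (volume : Measure (EuclideanSpace ℝ (Fin d))) :=
    hρint.aemeasurable
  -- Hölder's inequality
  set F : EuclideanSpace ℝ (Fin d) → ENNReal :=
    fun x => ENNReal.ofReal (ρ x * w x) ^ m with hF
  set G : EuclideanSpace ℝ (Fin d) → ENNReal :=
    fun x => ENNReal.ofReal (w x) ^ (-m) with hG
  have hpq : Real.HolderConjugate (1/m) (1/(1-m)) := by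
    rw [Real.holderConjugate_iff]
    constructor
    · rw [lt_div_iff₀ hm0]; linarith
    · rw [one_div, one_div, inv_inv, inv_inv]; ring
  have hFmeas : AEMeasurable F := by
    exact ((hρm.mul hw_meas.aemeasurable).ennreal_ofReal).pow_const _
  have hGmeas : AEMeasurable G := by
    exact (hw_meas.aemeasurable.ennreal_ofReal).pow_const _
  have holder := ENNReal.lintegral_mul_le_Lp_mul_Lq volume hpq hFmeas hGmeas
  have hFG : ∀ x, (F * G) x = ENNReal.ofReal (ρ x ^ m) := by
    intro x
    have hwne : ENNReal.ofReal (w x) ≠ 0 := by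
      simp [ENNReal.ofReal_pos.mpr (hw_pos x), (ENNReal.ofReal_pos.mpr (hw_pos x)).ne']
    have hwnt : ENNReal.ofReal (w x) ≠ ⊤ := ENNReal.ofReal_ne_top
    show F x * G x = _
    rw [hF, hG]
    simp only []
    rw [ENNReal.ofReal_mul (hρ x), ENNReal.mul_rpow_of_nonneg _ _ hm0.le,
      mul_assoc, ← ENNReal.rpow_add m (-m) hwne hwnt]
    simp [ENNReal.ofReal_rpow_of_nonneg (hρ x) hm0.le]
  have hFp : ∀ x, F x ^ (1/m) = ENNReal.ofReal (ρ x * w x) := by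
    intro x
    rw [hF]
    simp only []
    rw [← ENNReal.rpow_mul, mul_one_div_cancel hm0.ne', ENNReal.rpow_one]
  have hGq : ∀ x, G x ^ (1/(1-m)) = ENNReal.ofReal ((1 + ‖x‖) ^ (-r)) := by
    intro x
    rw [hG]
    simp only []
    rw [← ENNReal.rpow_mul, ENNReal.ofReal_rpow_of_pos (hw_pos x)]
    congr 1
    show ((1 + ‖x‖) ^ k) ^ (-m * (1 / (1 - m))) = (1 + ‖x‖) ^ (-r)
    rw [← rpow_mul (by positivity : (0:ℝ) ≤ 1 + ‖x‖)]
    congr 1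
    rw [hr_def]
    field_simp
  have hint1 : ∫⁻ x, F x ^ (1/m) = ENNReal.ofReal (∫ x, ρ x * w x) :=
    (lintegral_congr hFp).trans (ofReal_integral_eq_lintegral_ofReal hfint
      (ae_of_all _ fun x => mul_nonneg (hρ x) (hw_pos x).le)).symm
  have hint2 : ∫⁻ x, G x ^ (1/(1-m)) = ENNReal.ofReal B := by
    rw [hB]
    exact (lintegral_congr hGq).trans (ofReal_integral_eq_lintegral_ofReal hBint
      (ae_of_all _ fun x => rpow_nonneg (by positivity) _)).symm
  have key : ∫⁻ x, ENNReal.ofReal (ρ x ^ m) ≤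
      ENNReal.ofReal (t * (1 + J)) ^ m * ENNReal.ofReal B ^ (1 - m) := by
    calc ∫⁻ x, ENNReal.ofReal (ρ x ^ m) = ∫⁻ x, (F * G) x :=
          (lintegral_congr fun x => (hFG x).symm)
    _ ≤ (∫⁻ x, F x ^ (1/m)) ^ (1/(1/m)) * (∫⁻ x, G x ^ (1/(1-m))) ^ (1/(1/(1-m))) := holder
    _ = ENNReal.ofReal (∫ x, ρ x * w x) ^ m * ENNReal.ofReal B ^ (1 - m) := by
        rw [hint1, hint2, one_div_one_div, one_div_one_div]
    _ ≤ ENNReal.ofReal (t * (1 + J)) ^ m * ENNReal.ofReal B ^ (1 - m) :=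
        mul_le_mul_left (ENNReal.rpow_le_rpow (ENNReal.ofReal_le_ofReal hf_le) hm0.le) _
  have hRHS_ne_top : ENNReal.ofReal (t * (1 + J)) ^ m * ENNReal.ofReal B ^ (1 - m) ≠ ⊤ := by
    apply ENNReal.mul_ne_top
    · exact (ENNReal.rpow_lt_top_of_nonneg hm0.le ENNReal.ofReal_ne_top).ne
    · exact (ENNReal.rpow_lt_top_of_nonneg h1m.le ENNReal.ofReal_ne_top).ne
  have hρm_int : Integrable (fun x => ρ x ^ m) := by
    constructor
    · exact (hρm.pow_const m).aestronglyMeasurable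
    · rw [HasFiniteIntegral]
      have heq : ∀ x : EuclideanSpace ℝ (Fin d),
          (‖ρ x ^ m‖ₑ : ENNReal) = ENNReal.ofReal (ρ x ^ m) := fun x =>
        Real.enorm_eq_ofReal (rpow_nonneg (hρ x) m)
      rw [lintegral_congr heq]
      exact lt_of_le_of_lt key hRHS_ne_top.lt_top
  have hI_le : (∫ x, ρ x ^ m) ≤ (t * (1 + J)) ^ m * B ^ (1 - m) := by
    rw [integral_eq_lintegral_of_nonneg_ae (ae_of_all _ fun x => rpow_nonneg (hρ x) m)
      hρm_int.aestronglyMeasurable]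
    have h1 : (ENNReal.ofReal (t * (1 + J)) ^ m * ENNReal.ofReal B ^ (1 - m)).toReal
        = (t * (1 + J)) ^ m * B ^ (1 - m) := by
      rw [ENNReal.toReal_mul, ← ENNReal.toReal_rpow, ← ENNReal.toReal_rpow,
        ENNReal.toReal_ofReal (by positivity), ENNReal.toReal_ofReal hB0]
    rw [← h1]
    exact ENNReal.toReal_mono hRHS_ne_top key
  -- arithmetic conclusion
  clear_value B c t ε J
  have hI0 : (0:ℝ) ≤ ∫ x, ρ x ^ m := integral_nonneg fun x => rpow_nonneg (hρ x) m
  have ha0 : (0:ℝ) ≤ t * (1 + J) := by positivity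
  have hyoung : (t * (1 + J)) ^ m ≤ ε * (t * (1 + J)) + ε ^ (-(m / (1 - m))) :=
    aux_rpow_le_eps m hm0 hm1 ha0 hε0
  have hcB : B ^ (1 - m) / (1 - m) ≤ c := by rw [hc]; linarith
  have h6 : (∫ x, ρ x ^ m) / (1 - m)
      ≤ c * (ε * (t * (1 + J)) + ε ^ (-(m / (1 - m)))) := by
    have h7 : (∫ x, ρ x ^ m) / (1 - m) ≤ (t * (1 + J)) ^ m * (B ^ (1 - m) / (1 - m)) := by
      rw [div_le_iff₀ h1m]
      calc (∫ x, ρ x ^ m) ≤ (t * (1 + J)) ^ m * B ^ (1 - m) := hI_le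
      _ = (t * (1 + J)) ^ m * (B ^ (1 - m) / (1 - m)) * (1 - m) := by
          field_simp
    have h8 : (t * (1 + J)) ^ m * (B ^ (1 - m) / (1 - m)) ≤ (t * (1 + J)) ^ m * c :=
      mul_le_mul_of_nonneg_left hcB (rpow_nonneg ha0 m)
    have h9 : (t * (1 + J)) ^ m * c ≤ (ε * (t * (1 + J)) + ε ^ (-(m / (1 - m)))) * c :=
      mul_le_mul_of_nonneg_right hyoung hc0.le
    linarith [h7, h8, h9]
  have hmain : (1 / (m - 1)) * (∫ x, ρ x ^ m) = -((∫ x, ρ x ^ m) / (1 - m)) := by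
    rw [show m - 1 = -(1 - m) by ring, div_neg, neg_mul, one_div, ← div_eq_inv_mul]
  rw [hmain]
  have h10 : c * (ε * (t * (1 + J))) = (c * ε * t) * (1 + J) := by ring
  have h11 : (c * ε * t) * (1 + J) ≤ χ * (1 + J) :=
    mul_le_mul_of_nonneg_right hεct (by linarith)
  have h6' : (∫ x, ρ x ^ m) / (1 - m)
      ≤ (c * ε * t) * (1 + J) + c * ε ^ (-(m / (1 - m))) := by
    rw [mul_add, h10] at h6; exact h6
  have h12 : (∫ x, ρ x ^ m) / (1 - m) ≤ χ * (1 + J) + c * ε ^ (-(m / (1 - m))) :=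
    h6'.trans (by linarith)
  have h13 : χ * (1 + J) = χ + χ * J := by ring
  rw [h13] at h12
  linarith [h12]
end

section
/- Let k > 0. For every radially symmetric non-increasing probability density ρ on ℝ^d, ∫_{ℝ^d} |x|^k ρ(x) dx ≤ ∬_{ℝ^d×ℝ^d} |x-y|^k ρ(x)ρ(y) dx dy ≤ 2·max{1, 2^{k-1}} ∫_{ℝ^d} |x|^k ρ(x) dx. -/
open MeasureTheory Metric Real
open scoped ENNReal NNReal

lemma aux_rpow_add {k a b : ℝ} (hk : 0 < k) (ha : 0 ≤ a) (hb : 0 ≤ b) :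
    (a + b) ^ k ≤ max 1 ((2:ℝ) ^ (k - 1)) * (a ^ k + b ^ k) := by
  have hnn : 0 ≤ a ^ k + b ^ k := by positivity
  rcases le_total k 1 with h1 | h1
  · have key := NNReal.rpow_add_le_add_rpow a.toNNReal b.toNNReal hk.le h1
    have key' : (a + b) ^ k ≤ a ^ k + b ^ k := by
      have := NNReal.coe_le_coe.2 key
      simpa [NNReal.coe_rpow, Real.coe_toNNReal a ha, Real.coe_toNNReal b hb] using this
    exact key'.trans (le_mul_of_one_le_left hnn (le_max_left _ _))
  · have key := NNReal.rpow_add_le_mul_rpow_add_rpow a.toNNReal b.toNNReal h1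
    have key' : (a + b) ^ k ≤ (2:ℝ) ^ (k - 1) * (a ^ k + b ^ k) := by
      have := NNReal.coe_le_coe.2 key
      simpa [NNReal.coe_rpow, NNReal.coe_mul, Real.coe_toNNReal a ha,
        Real.coe_toNNReal b hb] using this
    exact key'.trans (mul_le_mul_of_nonneg_right (le_max_right _ _) hnn)

theorem interaction_moment_bounds_radial (d : ℕ) (hd : 1 ≤ d) (k : ℝ) (hk : 0 < k)
    (ρ : EuclideanSpace ℝ (Fin d) → ℝ) (hρ : ∀ x, 0 ≤ ρ x)
    (hmeas : Measurable ρ) (hint : Integrable ρ) (hmass : (∫ x, ρ x) = 1)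
    (hrad : ∃ φ : ℝ → ℝ, Antitone φ ∧ ∀ x, ρ x = φ ‖x‖) :
    (∫⁻ x, ENNReal.ofReal (‖x‖ ^ k * ρ x))
      ≤ (∫⁻ x, ∫⁻ y, ENNReal.ofReal (‖x - y‖ ^ k * ρ x * ρ y)) ∧
    (∫⁻ x, ∫⁻ y, ENNReal.ofReal (‖x - y‖ ^ k * ρ x * ρ y))
      ≤ ENNReal.ofReal (2 * max 1 ((2:ℝ) ^ (k - 1))) *
        ∫⁻ x, ENNReal.ofReal (‖x‖ ^ k * ρ x) := by
  obtain ⟨φ, hφ, hφρ⟩ := hrad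
  set g : EuclideanSpace ℝ (Fin d) → ℝ≥0∞ := fun y => ENNReal.ofReal (ρ y) with hg_def
  have hg : Measurable g := hmeas.ennreal_ofReal
  set μ : Measure (EuclideanSpace ℝ (Fin d)) := volume.withDensity g with hμ_def
  have hgint : (∫⁻ y, g y) = 1 := by
    have := MeasureTheory.ofReal_integral_eq_lintegral_ofReal hint (ae_of_all _ hρ)
    rw [hmass] at this
    simpa using this.symm
  have hμuniv : μ Set.univ = 1 := by
    rw [hμ_def, withDensity_apply _ MeasurableSet.univ, Measure.restrict_univ]; exact hgint
  have hfin : IsFiniteMeasure μ := ⟨by rw [hμuniv]; exact ENNReal.one_lt_top⟩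
  -- ball comparison
  have hball : ∀ (x : EuclideanSpace ℝ (Fin d)) (r : ℝ),
      μ (closedBall x r) ≤ μ (closedBall 0 r) := by
    intro x r
    have hCx : MeasurableSet (closedBall x r) := measurableSet_closedBall
    have hC0 : MeasurableSet (closedBall (0 : EuclideanSpace ℝ (Fin d)) r) :=
      measurableSet_closedBall
    have hvol : volume (closedBall x r) = volume (closedBall (0 : EuclideanSpace ℝ (Fin d)) r) :=
      Measure.addHaar_closedBall_center volume x r
    have hvdiff : volume (closedBall x r \ closedBall 0 r)
        = volume (closedBall (0 : EuclideanSpace ℝ (Fin d)) r \ closedBall x r) := by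
      have h1 := measure_inter_add_diff (μ := volume) (closedBall x r) hC0
      have h2 := measure_inter_add_diff (μ := volume)
        (closedBall (0 : EuclideanSpace ℝ (Fin d)) r) hCx
      rw [Set.inter_comm] at h2
      have hfin' : volume (closedBall x r ∩ closedBall 0 r) ≠ ⊤ :=
        ne_of_lt (lt_of_le_of_lt (measure_mono Set.inter_subset_left) measure_closedBall_lt_top)
      exact (ENNReal.add_right_inj hfin').1 (h1.trans (hvol.trans h2.symm))
    have hμdiff : μ (closedBall x r \ closedBall 0 r)
        ≤ μ (closedBall (0 : EuclideanSpace ℝ (Fin d)) r \ closedBall x r) := by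
      rw [hμ_def, withDensity_apply _ (hCx.diff hC0), withDensity_apply _ (hC0.diff hCx)]
      calc ∫⁻ y in closedBall x r \ closedBall 0 r, g y
          ≤ ∫⁻ _ in closedBall x r \ closedBall 0 r, ENNReal.ofReal (φ r) := by
            refine setLIntegral_mono' (hCx.diff hC0) fun y hy => ?_
            have hy2 : r < ‖y‖ := by
              have := hy.2
              simpa [mem_closedBall, dist_zero_right, not_le] using this
            exact ENNReal.ofReal_le_ofReal (by rw [hφρ]; exact hφ hy2.le)
        _ = ENNReal.ofReal (φ r) * volume (closedBall x r \ closedBall 0 r) :=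
            setLIntegral_const _ _
        _ = ENNReal.ofReal (φ r) * volume
              (closedBall (0 : EuclideanSpace ℝ (Fin d)) r \ closedBall x r) := by rw [hvdiff]
        _ = ∫⁻ _ in closedBall (0 : EuclideanSpace ℝ (Fin d)) r \ closedBall x r,
              ENNReal.ofReal (φ r) := (setLIntegral_const _ _).symm
        _ ≤ ∫⁻ y in closedBall (0 : EuclideanSpace ℝ (Fin d)) r \ closedBall x r, g y := by
            refine setLIntegral_mono' (hC0.diff hCx) fun y hy => ?_
            have hy1 : ‖y‖ ≤ r := by
              have := hy.1
              simpa [mem_closedBall, dist_zero_right] using this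
            exact ENNReal.ofReal_le_ofReal (by rw [hφρ]; exact hφ hy1)
    calc μ (closedBall x r)
        = μ (closedBall x r ∩ closedBall 0 r) + μ (closedBall x r \ closedBall 0 r) :=
          (measure_inter_add_diff _ hC0).symm
      _ ≤ μ (closedBall (0 : EuclideanSpace ℝ (Fin d)) r ∩ closedBall x r)
            + μ (closedBall (0 : EuclideanSpace ℝ (Fin d)) r \ closedBall x r) := by
          rw [Set.inter_comm]; exact add_le_add le_rfl hμdiff
      _ = μ (closedBall (0 : EuclideanSpace ℝ (Fin d)) r) := measure_inter_add_diff _ hCx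
  -- tail comparison
  have htail : ∀ (x : EuclideanSpace ℝ (Fin d)), ∀ t ∈ Set.Ioi (0:ℝ),
      μ {y | t < ‖y‖ ^ k} ≤ μ {y | t < ‖x - y‖ ^ k} := by
    intro x t ht
    have ht0 : (0:ℝ) ≤ t := (le_of_lt ht)
    set r := t ^ k⁻¹ with hr
    have hiff : ∀ z : EuclideanSpace ℝ (Fin d), (‖z‖ ≤ r ↔ ‖z‖ ^ k ≤ t) := fun z =>
      Real.le_rpow_inv_iff_of_pos (norm_nonneg z) ht0 hk
    have hs1 : {y : EuclideanSpace ℝ (Fin d) | t < ‖x - y‖ ^ k} = (closedBall x r)ᶜ := by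
      ext y
      simp only [Set.mem_setOf_eq, Set.mem_compl_iff, mem_closedBall, dist_eq_norm]
      rw [norm_sub_rev x y, hiff (y - x)]
      exact lt_iff_not_ge
    have hs0 : {y : EuclideanSpace ℝ (Fin d) | t < ‖y‖ ^ k}
        = (closedBall (0 : EuclideanSpace ℝ (Fin d)) r)ᶜ := by
      ext y
      simp only [Set.mem_setOf_eq, Set.mem_compl_iff, mem_closedBall, dist_zero_right]
      rw [hiff y]
      exact lt_iff_not_ge
    rw [hs1, hs0, measure_compl measurableSet_closedBall (measure_ne_top μ _),
      measure_compl measurableSet_closedBall (measure_ne_top μ _)]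
    exact tsub_le_tsub_left (hball x r) _
  have hkm : Measurable fun y : EuclideanSpace ℝ (Fin d) => ‖y‖ ^ k := by fun_prop
  have hkxm : ∀ x : EuclideanSpace ℝ (Fin d),
      Measurable fun y : EuclideanSpace ℝ (Fin d) => ‖x - y‖ ^ k := by intro x; fun_prop
  have hknn : ∀ y : EuclideanSpace ℝ (Fin d), 0 ≤ ‖y‖ ^ k :=
    fun y => Real.rpow_nonneg (norm_nonneg y) k
  -- layer cake
  have hlayer : ∀ x : EuclideanSpace ℝ (Fin d),
      (∫⁻ y, ENNReal.ofReal (‖y‖ ^ k) ∂μ) ≤ ∫⁻ y, ENNReal.ofReal (‖x - y‖ ^ k) ∂μ := by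
    intro x
    rw [lintegral_eq_lintegral_meas_lt μ (ae_of_all _ hknn) hkm.aemeasurable,
      lintegral_eq_lintegral_meas_lt μ
        (ae_of_all _ fun y => Real.rpow_nonneg (norm_nonneg _) k) (hkxm x).aemeasurable]
    exact setLIntegral_mono' measurableSet_Ioi (htail x)
  -- identities
  have hpt : ∀ x : EuclideanSpace ℝ (Fin d),
      ENNReal.ofReal (‖x‖ ^ k * ρ x) = ENNReal.ofReal (‖x‖ ^ k) * g x :=
    fun x => ENNReal.ofReal_mul (hknn x)
  have hJ : (∫⁻ y, ENNReal.ofReal (‖y‖ ^ k) ∂μ) = ∫⁻ x, ENNReal.ofReal (‖x‖ ^ k * ρ x) := by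
    rw [hμ_def, lintegral_withDensity_eq_lintegral_mul _ hg hkm.ennreal_ofReal]
    exact lintegral_congr fun x => by rw [hpt x, Pi.mul_apply, mul_comm]
  have hinner : ∀ x : EuclideanSpace ℝ (Fin d),
      (∫⁻ y, ENNReal.ofReal (‖x - y‖ ^ k * ρ x * ρ y))
        = g x * ∫⁻ y, ENNReal.ofReal (‖x - y‖ ^ k) ∂μ := by
    intro x
    rw [hμ_def, lintegral_withDensity_eq_lintegral_mul _ hg (hkxm x).ennreal_ofReal]
    simp only [Pi.mul_apply]
    rw [← lintegral_const_mul (f := fun a => g a * ENNReal.ofReal (‖x - a‖ ^ k)) _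
      (hg.mul (hkxm x).ennreal_ofReal)]
    refine lintegral_congr fun y => ?_
    have hre : ‖x - y‖ ^ k * ρ x * ρ y = ρ x * (ρ y * ‖x - y‖ ^ k) := by ring
    rw [hre, ENNReal.ofReal_mul (hρ x), ENNReal.ofReal_mul (hρ y)]
  -- lower bound
  have h1 : (∫⁻ x, g x * (∫⁻ y, ENNReal.ofReal (‖y‖ ^ k) ∂μ))
      = ∫⁻ y, ENNReal.ofReal (‖y‖ ^ k) ∂μ := by
    rw [lintegral_mul_const _ hg, hgint, one_mul]
  have hlow : (∫⁻ x, ENNReal.ofReal (‖x‖ ^ k * ρ x))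
      ≤ ∫⁻ x, ∫⁻ y, ENNReal.ofReal (‖x - y‖ ^ k * ρ x * ρ y) := by
    rw [← hJ, ← h1]
    refine lintegral_mono fun x => ?_
    rw [hinner x]
    exact mul_le_mul_right (hlayer x) (g x)
  refine ⟨hlow, ?_⟩
  -- upper bound
  set C := max 1 ((2:ℝ) ^ (k - 1)) with hC_def
  have hC1 : (1:ℝ) ≤ C := le_max_left _ _
  have hC0 : (0:ℝ) ≤ C := le_trans zero_le_one hC1
  have hJ' : (∫⁻ y, ENNReal.ofReal (‖y‖ ^ k) ∂μ) = ∫⁻ x, ENNReal.ofReal (‖x‖ ^ k * ρ x) := hJ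
  have hptw : ∀ x y : EuclideanSpace ℝ (Fin d),
      ‖x - y‖ ^ k ≤ C * ‖x‖ ^ k + C * ‖y‖ ^ k := by
    intro x y
    calc ‖x - y‖ ^ k ≤ (‖x‖ + ‖y‖) ^ k :=
          Real.rpow_le_rpow (norm_nonneg _) (norm_sub_le x y) hk.le
      _ ≤ C * (‖x‖ ^ k + ‖y‖ ^ k) := aux_rpow_add hk (norm_nonneg x) (norm_nonneg y)
      _ = C * ‖x‖ ^ k + C * ‖y‖ ^ k := by ring
  have hup_inner : ∀ x : EuclideanSpace ℝ (Fin d),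
      (∫⁻ y, ENNReal.ofReal (‖x - y‖ ^ k) ∂μ)
        ≤ ENNReal.ofReal C * ENNReal.ofReal (‖x‖ ^ k) + ENNReal.ofReal C * (∫⁻ x, ENNReal.ofReal (‖x‖ ^ k * ρ x)) := by
    intro x
    calc (∫⁻ y, ENNReal.ofReal (‖x - y‖ ^ k) ∂μ)
        ≤ ∫⁻ y, (ENNReal.ofReal (C * ‖x‖ ^ k) + ENNReal.ofReal (C * ‖y‖ ^ k)) ∂μ := by
          refine lintegral_mono fun y => ?_
          rw [← ENNReal.ofReal_add (by positivity) (by positivity)]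
          exact ENNReal.ofReal_le_ofReal (hptw x y)
      _ = ENNReal.ofReal (C * ‖x‖ ^ k) * μ Set.univ
            + ∫⁻ y, ENNReal.ofReal (C * ‖y‖ ^ k) ∂μ := by
          rw [lintegral_add_left measurable_const, lintegral_const]
      _ = ENNReal.ofReal C * ENNReal.ofReal (‖x‖ ^ k) + ENNReal.ofReal C * (∫⁻ x, ENNReal.ofReal (‖x‖ ^ k * ρ x)) := by
          rw [hμuniv, mul_one, ENNReal.ofReal_mul hC0]
          congr 1
          rw [← hJ', ← lintegral_const_mul _ hkm.ennreal_ofReal]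
          exact lintegral_congr fun y => ENNReal.ofReal_mul hC0
  have hgk : Measurable fun x : EuclideanSpace ℝ (Fin d) =>
      ENNReal.ofReal (‖x‖ ^ k) * g x := hkm.ennreal_ofReal.mul hg
  have hsplit : (∫⁻ x, (ENNReal.ofReal C * (ENNReal.ofReal (‖x‖ ^ k) * g x)
        + g x * (ENNReal.ofReal C * (∫⁻ x, ENNReal.ofReal (‖x‖ ^ k * ρ x)))))
      = ENNReal.ofReal C * (∫⁻ x, ENNReal.ofReal (‖x‖ ^ k) * g x)
        + (∫⁻ x, g x) * (ENNReal.ofReal C * (∫⁻ x, ENNReal.ofReal (‖x‖ ^ k * ρ x))) := by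
    rw [lintegral_add_left (f := fun x => ENNReal.ofReal C * (ENNReal.ofReal (‖x‖ ^ k) * g x))
        (measurable_const.mul hgk),
      lintegral_const_mul _ hgk, lintegral_mul_const _ hg]
  have hJJ : (∫⁻ x, ENNReal.ofReal (‖x‖ ^ k) * g x)
      = ∫⁻ x, ENNReal.ofReal (‖x‖ ^ k * ρ x) := lintegral_congr fun x => (hpt x).symm
  calc (∫⁻ x, ∫⁻ y, ENNReal.ofReal (‖x - y‖ ^ k * ρ x * ρ y))
      ≤ ∫⁻ x, (ENNReal.ofReal C * (ENNReal.ofReal (‖x‖ ^ k) * g x)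
          + g x * (ENNReal.ofReal C * (∫⁻ x, ENNReal.ofReal (‖x‖ ^ k * ρ x)))) := by
        refine lintegral_mono fun x => ?_
        rw [hinner x]
        calc g x * (∫⁻ y, ENNReal.ofReal (‖x - y‖ ^ k) ∂μ)
            ≤ g x * (ENNReal.ofReal C * ENNReal.ofReal (‖x‖ ^ k) + ENNReal.ofReal C * (∫⁻ x, ENNReal.ofReal (‖x‖ ^ k * ρ x))) :=
              mul_le_mul_right (hup_inner x) (g x)
          _ = ENNReal.ofReal C * (ENNReal.ofReal (‖x‖ ^ k) * g x)
              + g x * (ENNReal.ofReal C * (∫⁻ x, ENNReal.ofReal (‖x‖ ^ k * ρ x))) := by ring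
    _ = ENNReal.ofReal C * (∫⁻ x, ENNReal.ofReal (‖x‖ ^ k * ρ x))
          + 1 * (ENNReal.ofReal C * (∫⁻ x, ENNReal.ofReal (‖x‖ ^ k * ρ x))) := by
        rw [hsplit, hJJ, hgint]
    _ = ENNReal.ofReal (2 * C) * ∫⁻ x, ENNReal.ofReal (‖x‖ ^ k * ρ x) := by
        rw [one_mul, ENNReal.ofReal_mul (by norm_num : (0:ℝ) ≤ 2)]
        rw [ENNReal.ofReal_ofNat, two_mul, add_mul]
end

section
/- Let 1 < k < 2 and x, y ∈ ℝ^d with x ≠ 0. Define h(t) := |t x - y|^k. Then h(1) - h(0) ≤ -k (x·y) |y|^{k-2} + (2k/(k-1)) |x|^k, where the first term is interpreted as 0 when y = 0. -/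
open Real

/-- Tangent-line (concavity) bound for `u ^ p` with `0 ≤ p ≤ 1`. -/
theorem tangent_rpow_aux {p u a : ℝ} (hp1 : 0 ≤ p) (hp2 : p ≤ 1) (hu : 0 ≤ u) (ha : 0 < a) :
    u ^ p ≤ a ^ p + p * a ^ (p - 1) * (u - a) := by
  have h1 : (0:ℝ) ≤ u / a := div_nonneg hu ha.le
  have hs : (-1:ℝ) ≤ u / a - 1 := by linarith
  have hB := rpow_one_add_le_one_add_mul_self hs hp1 hp2
  have he : (1 : ℝ) + (u / a - 1) = u / a := by ring
  rw [he] at hB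
  have hap : 0 < a ^ p := Real.rpow_pos_of_pos ha p
  have hdiv : (u / a) ^ p = u ^ p / a ^ p := Real.div_rpow hu ha.le p
  rw [hdiv, div_le_iff₀ hap] at hB
  have hpa : a ^ (p - 1) = a ^ p / a := by
    rw [Real.rpow_sub ha, Real.rpow_one]
  refine hB.trans (le_of_eq ?_)
  rw [hpa]
  field_simp

set_option maxHeartbeats 1000000 in
theorem taylor_bound_k_between_one_two (d : ℕ) (k : ℝ) (hk1 : 1 < k) (hk2 : k < 2)
    (x y : EuclideanSpace ℝ (Fin d)) (hx : x ≠ 0) :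
    ‖x - y‖ ^ k - ‖y‖ ^ k
      ≤ -k * (inner ℝ x y : ℝ) * ‖y‖ ^ (k - 2) + (2 * k / (k - 1)) * ‖x‖ ^ k := by
  set a := ‖y‖ with ha_def
  set b := ‖x‖ with hb_def
  set t : ℝ := inner ℝ x y with ht_def
  set c := ‖x - y‖ with hc_def
  have hb : 0 < b := norm_pos_iff.mpr hx
  have hbk : 0 < b ^ k := Real.rpow_pos_of_pos hb k
  have hc0 : 0 ≤ c := norm_nonneg _
  have ht : |t| ≤ b * a := abs_real_inner_le_norm x y
  have hsq : c ^ 2 = b ^ 2 - 2 * t + a ^ 2 := norm_sub_sq_real x y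
  rcases eq_or_lt_of_le (norm_nonneg y) with ha0 | ha
  · -- y = 0
    have hy : y = 0 := norm_eq_zero.mp ha0.symm
    have ea : a = 0 := by rw [ha_def, hy, norm_zero]
    have ec : c = b := by rw [hc_def, hy, sub_zero]
    have et : t = 0 := by rw [ht_def, hy, inner_zero_right]
    have eak : a ^ k = 0 := by rw [ea, Real.zero_rpow (by linarith : k ≠ 0)]
    have eam : a ^ (k - 2) = 0 := by rw [ea, Real.zero_rpow (by linarith : k - 2 ≠ 0)]
    rw [ec, et, eak, eam]
    have h1 : (1:ℝ) ≤ 2 * k / (k - 1) := by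
      rw [le_div_iff₀ (by linarith : (0:ℝ) < k - 1)]
      linarith
    nlinarith [hbk]
  · -- a > 0
    have hck : c ^ k = ((c ^ 2 : ℝ)) ^ (k / 2) := by
      rw [← Real.rpow_natCast c 2, ← Real.rpow_mul hc0]
      norm_num
      congr 1
      ring
    have hak : a ^ k = ((a ^ 2 : ℝ)) ^ (k / 2) := by
      rw [← Real.rpow_natCast a 2, ← Real.rpow_mul ha.le]
      norm_num
      congr 1
      ring
    have hakm : a ^ (k - 2) = ((a ^ 2 : ℝ)) ^ (k / 2 - 1) := by
      rw [← Real.rpow_natCast a 2, ← Real.rpow_mul ha.le]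
      congr 1
      ring
    have hT := tangent_rpow_aux (p := k / 2) (u := c ^ 2) (a := a ^ 2)
      (by linarith) (by linarith) (by positivity) (by positivity)
    rw [← hck, ← hak, ← hakm] at hT
    have hT' : c ^ k ≤ a ^ k + (k / 2) * a ^ (k - 2) * (b ^ 2 - 2 * t) := by
      have : c ^ 2 - a ^ 2 = b ^ 2 - 2 * t := by rw [hsq]; ring
      rwa [this] at hT
    rcases le_or_gt b (4 * a) with hcase | hcase
    · -- b ≤ 4a: use the tangent bound
      have hkey : (k / 2) * a ^ (k - 2) * b ^ 2 ≤ (2 * k / (k - 1)) * b ^ k := by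
        have hb2 : (b : ℝ) ^ 2 = b ^ (2 - k) * b ^ k := by
          rw [← Real.rpow_add hb, ← Real.rpow_natCast b 2]
          norm_num
        have hfrac : a ^ (k - 2) * b ^ (2 - k) = (b / a) ^ (2 - k) := by
          rw [Real.div_rpow hb.le ha.le]
          rw [show (k - 2 : ℝ) = -(2 - k) by ring, Real.rpow_neg ha.le]
          field_simp
        have h4 : (b / a) ^ (2 - k) ≤ (4 : ℝ) ^ (2 - k) := by
          apply Real.rpow_le_rpow (by positivity) _ (by linarith)
          rw [div_le_iff₀ ha]
          linarith
        have h4' : (4 : ℝ) ^ (2 - k) ≤ 4 := by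
          calc (4 : ℝ) ^ (2 - k) ≤ (4 : ℝ) ^ (1 : ℝ) :=
                Real.rpow_le_rpow_of_exponent_le (by norm_num) (by linarith)
            _ = 4 := Real.rpow_one 4
        have h5 : (4 : ℝ) ≤ 4 / (k - 1) := by
          rw [le_div_iff₀ (by linarith)]
          nlinarith
        have hval : a ^ (k - 2) * b ^ (2 - k) ≤ 4 / (k - 1) := by
          rw [hfrac]; linarith
        calc (k / 2) * a ^ (k - 2) * b ^ 2
            = (k / 2) * (a ^ (k - 2) * b ^ (2 - k)) * b ^ k := by rw [hb2]; ring
          _ ≤ (k / 2) * (4 / (k - 1)) * b ^ k := by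
              apply mul_le_mul_of_nonneg_right _ hbk.le
              apply mul_le_mul_of_nonneg_left hval (by linarith)
          _ = (2 * k / (k - 1)) * b ^ k := by ring
      linarith [hT', hkey]
    · -- 4a < b
      have hab : a ≤ b := by linarith
      have hc5 : c ≤ 5 / 4 * b := by
        have := norm_sub_le x y
        simp only [← hb_def, ← ha_def, ← hc_def] at this
        linarith
      have hck5 : c ^ k ≤ 25 / 16 * b ^ k := by
        calc c ^ k ≤ (5 / 4 * b) ^ k := Real.rpow_le_rpow hc0 hc5 (by linarith)
          _ = (5 / 4 : ℝ) ^ k * b ^ k := Real.mul_rpow (by norm_num) hb.le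
          _ ≤ (5 / 4 : ℝ) ^ (2 : ℝ) * b ^ k := by
              apply mul_le_mul_of_nonneg_right _ hbk.le
              exact Real.rpow_le_rpow_of_exponent_le (by norm_num) (by linarith)
          _ = 25 / 16 * b ^ k := by
              rw [show ((2:ℝ)) = ((2:ℕ):ℝ) by norm_num, Real.rpow_natCast]
              norm_num
      have hakm1 : a * a ^ (k - 2) = a ^ (k - 1) := by
        nth_rewrite 1 [← Real.rpow_one a]
        rw [← Real.rpow_add ha]
        congr 1
        ring
      have hak1 : a ^ (k - 1) ≤ b ^ (k - 1) := Real.rpow_le_rpow ha.le hab (by linarith)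
      have hbk1 : b * b ^ (k - 1) = b ^ k := by
        nth_rewrite 1 [← Real.rpow_one b]
        rw [← Real.rpow_add hb]
        congr 1
        ring
      have hinner : -k * t * a ^ (k - 2) ≥ -k * b ^ k := by
        have h1 : t ≤ b * a := (abs_le.mp ht).2
        have h2 : 0 ≤ a ^ (k - 2) := Real.rpow_nonneg ha.le _
        have h3 : -k * t * a ^ (k - 2) ≥ -k * (b * a) * a ^ (k - 2) := by
          have hkt : k * t ≤ k * (b * a) := mul_le_mul_of_nonneg_left h1 (by linarith)
          have := mul_le_mul_of_nonneg_right hkt h2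
          linarith
        have h4 : -k * (b * a) * a ^ (k - 2) = -k * b * a ^ (k - 1) := by
          rw [← hakm1]; ring
        have h5 : -k * b * a ^ (k - 1) ≥ -k * b * b ^ (k - 1) := by
          have := mul_le_mul_of_nonneg_left hak1
            (mul_nonneg (by linarith : (0:ℝ) ≤ k) hb.le)
          linarith
        rw [h4] at h3
        calc -k * t * a ^ (k - 2) ≥ -k * b * b ^ (k - 1) := by linarith
          _ = -k * b ^ k := by rw [← hbk1]; ring
      have hconst : (25 / 16 + k : ℝ) ≤ 2 * k / (k - 1) := by
        rw [le_div_iff₀ (by linarith : (0:ℝ) < k - 1)]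
        nlinarith [mul_nonneg (by linarith : (0:ℝ) ≤ k - 1) (by linarith : (0:ℝ) ≤ 2 - k)]
      have hakpos : 0 ≤ a ^ k := Real.rpow_nonneg ha.le k
      have hfin := mul_le_mul_of_nonneg_right hconst hbk.le
      linarith
end

section
/- Let d ≥ 1, 0 < m < 1, 0 < k < d(1-m)/m, and choose any β with k < β < d(1-m)/m. Define the probability density ρ = ∑_{j≥0} (ρ_j / |B_{2^{j+1}} \ B_{2^j}|) · 𝟙_{B_{2^{j+1}} \ B_{2^j}} with ρ_j = 2^{-jβ}/∑_{i≥0} 2^{-iβ}. Then ∫ |x|^k ρ(x) dx < ∞ while ∫ ρ(x)^m dx = +∞; in particular F_{m,k}[ρ] = -∞. -/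
open MeasureTheory Metric Real

namespace ZoneIAux

variable {d : ℕ}

/-- The annulus `B_{2^{j+1}} \ B_{2^j}`. -/
def A (d : ℕ) (j : ℕ) : Set (EuclideanSpace ℝ (Fin d)) :=
  ball 0 ((2:ℝ) ^ ((j:ℝ) + 1)) \ ball 0 ((2:ℝ) ^ (j:ℝ))

lemma mem_A_iff {j : ℕ} {x : EuclideanSpace ℝ (Fin d)} :
    x ∈ A d j ↔ (2:ℝ) ^ (j:ℝ) ≤ ‖x‖ ∧ ‖x‖ < (2:ℝ) ^ ((j:ℝ) + 1) := by
  simp only [A, Set.mem_diff, mem_ball_zero_iff, not_lt]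
  tauto

lemma measurableSet_A (j : ℕ) : MeasurableSet (A d j) :=
  measurableSet_ball.diff measurableSet_ball

lemma pairwise_disjoint_A : Pairwise (Function.onFun Disjoint (A d)) := by
  have key : ∀ i j : ℕ, i < j → Disjoint (A d i) (A d j) := by
    intro i j hij
    rw [Set.disjoint_left]
    intro x hxi hxj
    rw [mem_A_iff] at hxi hxj
    have h1 : ((i:ℝ) + 1) ≤ (j:ℝ) := by exact_mod_cast hij
    have h2 : (2:ℝ) ^ ((i:ℝ) + 1) ≤ (2:ℝ) ^ (j:ℝ) :=
      Real.rpow_le_rpow_of_exponent_le one_le_two h1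
    linarith [hxi.2, hxj.1]
  intro i j hij
  rcases lt_or_gt_of_ne hij with h | h
  · exact key i j h
  · exact (key j i h).symm

lemma nontrivial_E (hd : 1 ≤ d) : Nontrivial (EuclideanSpace ℝ (Fin d)) := by
  apply Module.nontrivial_of_finrank_pos (R := ℝ)
  rw [finrank_euclideanSpace_fin]
  omega

lemma volume_A (hd : 1 ≤ d) (j : ℕ) :
    volume (A d j) = ENNReal.ofReal
      ((2:ℝ) ^ ((j:ℝ) * d) * (((2:ℝ) ^ d - 1) *
        (volume (ball (0:EuclideanSpace ℝ (Fin d)) 1)).toReal)) := by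
  haveI := nontrivial_E hd
  have hω : volume (ball (0:EuclideanSpace ℝ (Fin d)) 1) ≠ ⊤ := measure_ball_lt_top.ne
  have hr1 : (0:ℝ) ≤ (2:ℝ) ^ ((j:ℝ)) := (Real.rpow_pos_of_pos two_pos _).le
  have hr2 : (0:ℝ) ≤ (2:ℝ) ^ ((j:ℝ) + 1) := (Real.rpow_pos_of_pos two_pos _).le
  have hsub : ball (0:EuclideanSpace ℝ (Fin d)) ((2:ℝ) ^ (j:ℝ)) ⊆
      ball 0 ((2:ℝ) ^ ((j:ℝ) + 1)) := by
    apply ball_subset_ball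
    exact Real.rpow_le_rpow_of_exponent_le one_le_two (by linarith)
  have hmono : ((2:ℝ) ^ ((j:ℝ))) ^ d ≤ ((2:ℝ) ^ ((j:ℝ) + 1)) ^ d := by
    apply pow_le_pow_left₀ hr1
    exact Real.rpow_le_rpow_of_exponent_le one_le_two (by linarith)
  have hpow : ∀ y : ℝ, ((2:ℝ) ^ (y:ℝ)) ^ d = (2:ℝ) ^ (y * d) := by
    intro y
    rw [← Real.rpow_natCast ((2:ℝ) ^ (y:ℝ)) d, ← Real.rpow_mul (by norm_num)]
  calc volume (A d j)
      = volume (ball (0:EuclideanSpace ℝ (Fin d)) ((2:ℝ) ^ ((j:ℝ) + 1)))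
        - volume (ball (0:EuclideanSpace ℝ (Fin d)) ((2:ℝ) ^ (j:ℝ))) := by
        rw [A, measure_diff hsub measurableSet_ball.nullMeasurableSet
          measure_ball_lt_top.ne]
    _ = ENNReal.ofReal (((2:ℝ) ^ ((j:ℝ) + 1)) ^ d - ((2:ℝ) ^ (j:ℝ)) ^ d) *
        volume (ball (0:EuclideanSpace ℝ (Fin d)) 1) := by
        rw [Measure.addHaar_ball _ _ hr1, Measure.addHaar_ball _ _ hr2,
          finrank_euclideanSpace_fin, ← ENNReal.sub_mul (fun _ _ => hω),
          ← ENNReal.ofReal_sub _ (pow_nonneg hr1 d)]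
    _ = ENNReal.ofReal ((((2:ℝ) ^ ((j:ℝ) + 1)) ^ d - ((2:ℝ) ^ (j:ℝ)) ^ d) *
        (volume (ball (0:EuclideanSpace ℝ (Fin d)) 1)).toReal) := by
        rw [ENNReal.ofReal_mul (by linarith), ENNReal.ofReal_toReal hω]
    _ = _ := by
        congr 1
        rw [hpow, hpow]
        have : ((j:ℝ) + 1) * d = (j:ℝ) * d + d := by ring
        rw [this, Real.rpow_add two_pos, Real.rpow_natCast]
        ring

end ZoneIAux

open ZoneIAux

theorem unbounded_below_zone_I (d : ℕ) (hd : 1 ≤ d) (m k β : ℝ)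
    (hm0 : 0 < m) (hm1 : m < 1) (hk : 0 < k) (hkβ : k < β)
    (hβ : β < (d:ℝ) * (1 - m) / m)
    (ρ : EuclideanSpace ℝ (Fin d) → ℝ)
    (hρdef : ∀ x, ρ x = ∑' j : ℕ,
      (((2:ℝ) ^ (-(j:ℝ) * β) / ∑' i : ℕ, (2:ℝ) ^ (-(i:ℝ) * β)) /
        (volume (ball (0:EuclideanSpace ℝ (Fin d)) ((2:ℝ) ^ ((j:ℝ) + 1)) \
          ball 0 ((2:ℝ) ^ (j:ℝ)))).toReal) *
      Set.indicator (ball (0:EuclideanSpace ℝ (Fin d)) ((2:ℝ) ^ ((j:ℝ) + 1)) \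
          ball 0 ((2:ℝ) ^ (j:ℝ))) 1 x) :
    (∫⁻ x, ENNReal.ofReal (‖x‖ ^ k * ρ x)) < ⊤ ∧
    (∫⁻ x, ENNReal.ofReal (ρ x ^ m)) = ⊤ := by
  classical
  haveI := nontrivial_E (d := d) hd
  set S : ℝ := ∑' i : ℕ, (2:ℝ) ^ (-(i:ℝ) * β) with hS
  have hgeom : ∀ i : ℕ, (2:ℝ) ^ (-(i:ℝ) * β) = ((2:ℝ) ^ (-β)) ^ i := by
    intro i
    rw [← Real.rpow_natCast ((2:ℝ) ^ (-β)) i, ← Real.rpow_mul (by norm_num)]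
    congr 1; ring
  have hrβ0 : (0:ℝ) < (2:ℝ) ^ (-β) := Real.rpow_pos_of_pos two_pos _
  have hrβ1 : (2:ℝ) ^ (-β) < 1 :=
    Real.rpow_lt_one_of_one_lt_of_neg one_lt_two (by linarith)
  have hSsum : Summable (fun i : ℕ => (2:ℝ) ^ (-(i:ℝ) * β)) := by
    simp only [hgeom]
    exact summable_geometric_of_lt_one hrβ0.le hrβ1
  have hSpos : 0 < S :=
    Summable.tsum_pos hSsum (fun i => (Real.rpow_pos_of_pos two_pos _).le) 0
      (Real.rpow_pos_of_pos two_pos _)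
  set ω₀ : ℝ := (volume (ball (0:EuclideanSpace ℝ (Fin d)) 1)).toReal with hω₀
  have hω₀pos : 0 < ω₀ :=
    ENNReal.toReal_pos (measure_ball_pos volume 0 one_pos).ne' measure_ball_lt_top.ne
  set K : ℝ := ((2:ℝ) ^ d - 1) * ω₀ with hK
  have hKpos : 0 < K := by
    rw [hK]
    apply mul_pos _ hω₀pos
    have : (1:ℝ) < 2 ^ d := one_lt_pow₀ one_lt_two (by omega)
    linarith
  set w : ℕ → ℝ := fun j => (2:ℝ) ^ ((j:ℝ) * d) * K with hw
  have hwpos : ∀ j, 0 < w j := fun j => mul_pos (Real.rpow_pos_of_pos two_pos _) hKpos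
  have hvolA : ∀ j, volume (A d j) = ENNReal.ofReal (w j) := fun j => volume_A hd j
  have hvolA' : ∀ j : ℕ, (volume (A d j)).toReal = w j := by
    intro j
    rw [hvolA j, ENNReal.toReal_ofReal (hwpos j).le]
  set c : ℕ → ℝ := fun j => (2:ℝ) ^ (-(j:ℝ) * β) / S with hc
  have hcpos : ∀ j, 0 < c j := fun j => div_pos (Real.rpow_pos_of_pos two_pos _) hSpos
  set a : ℕ → ℝ := fun j => c j / w j with ha
  have hapos : ∀ j, 0 < a j := fun j => div_pos (hcpos j) (hwpos j)
  have hρdef' : ∀ x, ρ x = ∑' j : ℕ,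
      (c j / (volume (A d j)).toReal) * Set.indicator (A d j) 1 x := hρdef
  -- pointwise description of ρ
  have hρ_on : ∀ j : ℕ, ∀ x ∈ A d j, ρ x = a j := by
    intro j x hx
    rw [hρdef' x, tsum_eq_single j]
    · rw [Set.indicator_of_mem hx, hvolA']
      simp [ha]
    · intro i hij
      have hx' : x ∉ A d i := by
        intro hxi
        exact (pairwise_disjoint_A hij).ne_of_mem hxi hx rfl
      rw [Set.indicator_of_notMem hx', mul_zero]
  have hρ_off : ∀ x : EuclideanSpace ℝ (Fin d), (∀ j : ℕ, x ∉ A d j) → ρ x = 0 := by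
    intro x hx
    rw [hρdef' x]
    convert tsum_zero with j
    rw [Set.indicator_of_notMem (hx j), mul_zero]
  set U : Set (EuclideanSpace ℝ (Fin d)) := ⋃ j, A d j with hU
  have hUmeas : MeasurableSet U := MeasurableSet.iUnion (fun j => measurableSet_A j)
  constructor
  · -- first integral finite
    set g : EuclideanSpace ℝ (Fin d) → ENNReal :=
      fun x => ENNReal.ofReal (‖x‖ ^ k * ρ x) with hg
    have hg_ind : g = U.indicator g := by
      funext x
      by_cases hx : x ∈ U
      · rw [Set.indicator_of_mem hx]
      · rw [Set.indicator_of_notMem hx, hg]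
        have : ρ x = 0 := hρ_off x (by simpa [hU, Set.mem_iUnion] using hx)
        simp [this]
    calc ∫⁻ x, g x = ∫⁻ x, U.indicator g x := by rw [← hg_ind]
      _ = ∫⁻ x in U, g x := lintegral_indicator hUmeas g
      _ = ∑' j, ∫⁻ x in A d j, g x :=
          lintegral_iUnion (fun j => measurableSet_A j) pairwise_disjoint_A g
      _ ≤ ∑' j : ℕ, ENNReal.ofReal ((2:ℝ) ^ (((j:ℝ) + 1) * k) * c j) := by
          apply ENNReal.tsum_le_tsum
          intro j
          have hb : ∫⁻ x in A d j, g x ≤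
              ∫⁻ _ in A d j, ENNReal.ofReal ((2:ℝ) ^ (((j:ℝ) + 1) * k) * a j) := by
            apply setLIntegral_mono measurable_const
            intro x hx
            rw [hg]
            apply ENNReal.ofReal_le_ofReal
            rw [hρ_on j x hx]
            apply mul_le_mul_of_nonneg_right _ (hapos j).le
            have hxk : ‖x‖ ^ k ≤ ((2:ℝ) ^ ((j:ℝ) + 1)) ^ k :=
              Real.rpow_le_rpow (norm_nonneg x) (mem_A_iff.mp hx).2.le hk.le
            rwa [← Real.rpow_mul (by norm_num)] at hxk
          refine hb.trans ?_
          rw [setLIntegral_const, hvolA j, ← ENNReal.ofReal_mul (by positivity)]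
          apply ENNReal.ofReal_le_ofReal
          rw [mul_assoc]
          show (2:ℝ) ^ (((j:ℝ) + 1) * k) * (c j / w j * w j) ≤ _
          rw [div_mul_cancel₀ _ (hwpos j).ne']
      _ < ⊤ := by
          have hterm : ∀ j : ℕ, (2:ℝ) ^ (((j:ℝ) + 1) * k) * c j
              = ((2:ℝ) ^ k / S) * ((2:ℝ) ^ (k - β)) ^ j := by
            intro j
            simp only [hc]
            rw [← Real.rpow_natCast ((2:ℝ) ^ (k - β)) j,
              ← Real.rpow_mul (by norm_num : (0:ℝ) ≤ 2), ← mul_div_assoc,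
              div_mul_eq_mul_div, ← Real.rpow_add two_pos, ← Real.rpow_add two_pos]
            congr 2
            ring
          have hsum2 : Summable (fun j : ℕ => (2:ℝ) ^ (((j:ℝ) + 1) * k) * c j) := by
            simp only [hterm]
            exact (summable_geometric_of_lt_one (Real.rpow_pos_of_pos two_pos _).le
              (Real.rpow_lt_one_of_one_lt_of_neg one_lt_two (by linarith))).mul_left _
          rw [← ENNReal.ofReal_tsum_of_nonneg (fun j => by positivity) hsum2]
          exact ENNReal.ofReal_lt_top
  · -- second integral infinite
    set ε : ℝ := K / (S * K) ^ m with hε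
    have hεpos : 0 < ε := by
      rw [hε]
      exact div_pos hKpos (Real.rpow_pos_of_pos (mul_pos hSpos hKpos) m)
    have hterm : ∀ j : ℕ, ENNReal.ofReal ε ≤ ∫⁻ x in A d j, ENNReal.ofReal (ρ x ^ m) := by
      intro j
      have hconst : ∫⁻ x in A d j, ENNReal.ofReal (ρ x ^ m)
          = ENNReal.ofReal (a j ^ m) * volume (A d j) := by
        rw [← setLIntegral_const (A d j) (ENNReal.ofReal (a j ^ m))]
        apply setLIntegral_congr_fun (measurableSet_A j)
        intro x hx
        simp only [hρ_on j x hx]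
      rw [hconst, hvolA j, ← ENNReal.ofReal_mul (by positivity)]
      apply ENNReal.ofReal_le_ofReal
      -- a j ^ m * w j = 2 ^ (j * (d(1-m) - βm)) * ε ≥ ε
      have hwj : w j = (2:ℝ) ^ ((j:ℝ) * d) * K := by simp only [hw]
      have hcj : c j = (2:ℝ) ^ (-(j:ℝ) * β) / S := by simp only [hc]
      have haj : a j = c j / w j := by simp only [ha]
      have ha_eq : a j = (2:ℝ) ^ (-(j:ℝ) * (β + d)) / (S * K) := by
        have hx : (2:ℝ) ^ (-(j:ℝ) * (β + d))
            = (2:ℝ) ^ (-(j:ℝ) * β) / (2:ℝ) ^ ((j:ℝ) * d) := by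
          rw [← Real.rpow_sub two_pos]
          congr 1
          ring
        rw [haj, hcj, hwj, hx, div_div, div_div]
        congr 1
        ring
      have hP : (0:ℝ) < S * K := mul_pos hSpos hKpos
      have hkey : a j ^ m * w j
          = (2:ℝ) ^ ((j:ℝ) * ((d:ℝ) * (1 - m) - β * m)) * ε := by
        rw [ha_eq, hwj, hε, Real.div_rpow (Real.rpow_pos_of_pos two_pos _).le hP.le,
          ← Real.rpow_mul (by norm_num : (0:ℝ) ≤ 2),
          div_mul_eq_mul_div, mul_div_assoc', ← mul_assoc, ← Real.rpow_add two_pos]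
        have hE : -(j:ℝ) * (β + (d:ℝ)) * m + (j:ℝ) * (d:ℝ)
            = (j:ℝ) * ((d:ℝ) * (1 - m) - β * m) := by ring
        rw [hE]
      rw [hkey]
      have hβm : β * m < (d:ℝ) * (1 - m) := (lt_div_iff₀ hm0).mp hβ
      have hexp : 0 ≤ (j:ℝ) * ((d:ℝ) * (1 - m) - β * m) :=
        mul_nonneg (Nat.cast_nonneg j) (by linarith)
      exact le_mul_of_one_le_left hεpos.le (Real.one_le_rpow one_le_two hexp)
    have htop : (⊤ : ENNReal) ≤ ∫⁻ x, ENNReal.ofReal (ρ x ^ m) := by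
      calc (⊤ : ENNReal) = ∑' _ : ℕ, ENNReal.ofReal ε :=
            (ENNReal.tsum_const_eq_top_of_ne_zero
              (ENNReal.ofReal_pos.mpr hεpos).ne').symm
        _ ≤ ∑' j, ∫⁻ x in A d j, ENNReal.ofReal (ρ x ^ m) :=
            ENNReal.tsum_le_tsum hterm
        _ = ∫⁻ x in U, ENNReal.ofReal (ρ x ^ m) :=
            (lintegral_iUnion (fun j => measurableSet_A j) pairwise_disjoint_A _).symm
        _ ≤ ∫⁻ x, ENNReal.ofReal (ρ x ^ m) := setLIntegral_le_lintegral U _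
    exact top_le_iff.mp htop
end
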